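/- Let T > 0, let d_D, d_T, r_R ≥ 0, and let u : [0,T] → [0,1] be measurable. If x = (s, r) is a trajectory of the controlled Lotka–Volterra system with r(0) = 0 and s(0) ∈ [0,1], then r(τ) = 0 and s(τ) ∈ [0,1] for every τ ∈ [0,T] (the boundary segment Δ₂ := {(x₁,x₂) ∈ Δ : x₂ = 0} is invariant). -/

import Mathlib

open MeasureTheory Set Filter Topology

lemma gronwall_zero {a b M : ℝ} (hab : a ≤ b) (hM : 0 ≤ M)
    {f : ℝ → ℝ} (hf : ContinuousOn f (Icc a b))
    (hf0 : ∀ τ ∈ Icc a b, 0 ≤ f τ)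
    (hineq : ∀ τ ∈ Icc a b, f τ ≤ M * ∫ σ in a..τ, f σ) :
    ∀ τ ∈ Icc a b, f τ = 0 := by
  set φ : ℝ → ℝ := fun τ => ∫ σ in a..τ, f σ with hφ
  have hint : ∀ τ ∈ Icc a b, IntervalIntegrable f volume a τ := fun τ hτ =>
    (hf.mono (by rw [uIcc_of_le hτ.1]; exact Icc_subset_Icc le_rfl hτ.2)).intervalIntegrable
  have hφcont : ContinuousOn φ (Icc a b) := by
    have := intervalIntegral.continuousOn_primitive_interval
      (f := f) (μ := volume) (a := a) (b := b)
      ((hf.mono (by rw [uIcc_of_le hab])).integrableOn_compact isCompact_uIcc)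
    rwa [uIcc_of_le hab] at this
  have hφderiv : ∀ τ ∈ Ioo a b, HasDerivAt φ (f τ) τ := by
    intro τ hτ
    exact intervalIntegral.integral_hasDerivAt_right (hint τ ⟨hτ.1.le, hτ.2.le⟩)
      ((hf.mono Ioo_subset_Icc_self).stronglyMeasurableAtFilter isOpen_Ioo τ hτ)
      ((hf τ ⟨hτ.1.le, hτ.2.le⟩).continuousAt (Icc_mem_nhds hτ.1 hτ.2))
  set ψ : ℝ → ℝ := fun τ => φ τ * Real.exp (-(M * τ)) with hψ
  have hψderiv : ∀ τ ∈ Ioo a b, HasDerivAt ψ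
      (f τ * Real.exp (-(M * τ)) + φ τ * (Real.exp (-(M * τ)) * (-M))) τ := by
    intro τ hτ
    have h1 : HasDerivAt (fun τ : ℝ => Real.exp (-(M * τ))) (Real.exp (-(M * τ)) * (-M)) τ := by
      have : HasDerivAt (fun τ : ℝ => -(M * τ)) (-M) τ := by
        exact (((hasDerivAt_id τ).const_mul M).neg).congr_deriv (by ring)
      simpa using this.exp
    exact (hφderiv τ hτ).mul h1
  have hanti : AntitoneOn ψ (Icc a b) := by
    apply antitoneOn_of_deriv_nonpos (convex_Icc a b)
    · exact hφcont.mul (Real.continuous_exp.comp (by continuity)).continuousOn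
    · intro τ hτ
      rw [interior_Icc] at hτ
      exact (hψderiv τ hτ).differentiableAt.differentiableWithinAt
    · intro τ hτ
      rw [interior_Icc] at hτ
      rw [(hψderiv τ hτ).deriv]
      have h1 : f τ - M * φ τ ≤ 0 := sub_nonpos.mpr (hineq τ ⟨hτ.1.le, hτ.2.le⟩)
      have h2 : (0:ℝ) < Real.exp (-(M * τ)) := Real.exp_pos _
      nlinarith
  have hφnonpos : ∀ τ ∈ Icc a b, φ τ ≤ 0 := by
    intro τ hτ
    have h := hanti (left_mem_Icc.mpr hab) hτ hτ.1
    have hψa : ψ a = 0 := by simp [hψ, hφ]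
    rw [hψa] at h
    simp only [hψ] at h
    have h2 : (0:ℝ) < Real.exp (-(M * τ)) := Real.exp_pos _
    exact le_of_mul_le_mul_right (by linarith) h2
  intro τ hτ
  have h1 := hineq τ hτ
  have h2 := hφnonpos τ hτ
  have h3 := hf0 τ hτ
  nlinarith

lemma exit_point {a b : ℝ} (hab : a ≤ b) {g : ℝ → ℝ} (hg : ContinuousOn g (Icc a b))
    (hga : g a ≤ 0) (hgb : 0 < g b) :
    ∃ t₁ ∈ Ico a b, g t₁ = 0 ∧ ∀ t ∈ Ioc t₁ b, 0 < g t := by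
  set S : Set ℝ := Icc a b ∩ g ⁻¹' Iic 0 with hS
  have hSne : S.Nonempty := ⟨a, ⟨left_mem_Icc.mpr hab, hga⟩⟩
  have hSbdd : BddAbove S := ⟨b, fun x hx => hx.1.2⟩
  have hSclosed : IsClosed S := hg.preimage_isClosed_of_isClosed isClosed_Icc isClosed_Iic
  set t₁ := sSup S with ht₁
  have ht₁S : t₁ ∈ S := hSclosed.csSup_mem hSne hSbdd
  have ht₁b : t₁ < b := lt_of_le_of_ne ht₁S.1.2 (fun h => by
    rw [h] at ht₁S; exact absurd ht₁S.2 (not_le.mpr hgb))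
  have hpos : ∀ t ∈ Ioc t₁ b, 0 < g t := by
    intro t ht
    by_contra h
    exact absurd (le_csSup hSbdd ⟨⟨ht₁S.1.1.trans ht.1.le, ht.2⟩, not_lt.mp h⟩) (not_le.mpr ht.1)
  have hge : 0 ≤ g t₁ := by
    have hne : (𝓝[Ioc t₁ b] t₁).NeBot := by
      rw [mem_closure_iff_nhdsWithin_neBot.symm, closure_Ioc ht₁b.ne]
      exact left_mem_Icc.mpr ht₁b.le
    have htend : Filter.Tendsto g (𝓝[Ioc t₁ b] t₁) (𝓝 (g t₁)) :=
      (hg.continuousWithinAt ht₁S.1).mono (fun x hx => ⟨ht₁S.1.1.trans hx.1.le, hx.2⟩ :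
        Ioc t₁ b ⊆ Icc a b)
    exact ge_of_tendsto htend (Filter.eventually_of_mem self_mem_nhdsWithin
      fun t ht => (hpos t ht).le)
  exact ⟨t₁, ⟨ht₁S.1.1, ht₁b⟩, le_antisymm ht₁S.2 hge, hpos⟩

/-- **Invariance of the boundary segment `Δ₂ = {(x₁,x₂) ∈ Δ : x₂ = 0}`** for the controlled
Lotka–Volterra system: if the absolutely continuous trajectory `x = (s, r)` (written in
integral form) starts with `r(0) = 0` and `s(0) ∈ [0,1]`, then `r(τ) = 0` and `s(τ) ∈ [0,1]`
on the whole `[0,T]`. -/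
theorem segmentDelta2_invariance
    (T d_D d_T r_R : ℝ) (hT : 0 < T) (hdD : 0 ≤ d_D) (hdT : 0 ≤ d_T) (hrR : 0 ≤ r_R)
    (u : ℝ → ℝ) (hu_meas : Measurable u) (hu01 : ∀ τ ∈ Icc (0:ℝ) T, u τ ∈ Icc (0:ℝ) 1)
    (s r : ℝ → ℝ)
    (hs_cont : ContinuousOn s (Icc 0 T)) (hr_cont : ContinuousOn r (Icc 0 T))
    (hs_int : IntervalIntegrable
      (fun σ => (1 - s σ - r σ) * (1 - d_D * u σ) * s σ - d_T * s σ) volume 0 T)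
    (hr_int : IntervalIntegrable
      (fun σ => r_R * (1 - s σ - r σ) * r σ - d_T * r σ) volume 0 T)
    (hs_eq : ∀ τ ∈ Icc (0:ℝ) T, s τ = s 0 +
      ∫ σ in (0:ℝ)..τ, ((1 - s σ - r σ) * (1 - d_D * u σ) * s σ - d_T * s σ))
    (hr_eq : ∀ τ ∈ Icc (0:ℝ) T, r τ = r 0 +
      ∫ σ in (0:ℝ)..τ, (r_R * (1 - s σ - r σ) * r σ - d_T * r σ))
    (hr0 : r 0 = 0) (hs0 : s 0 ∈ Icc (0:ℝ) 1) :
    ∀ τ ∈ Icc (0:ℝ) T, r τ = 0 ∧ s τ ∈ Icc (0:ℝ) 1 := by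
  -- a uniform bound on `s` and `r`
  obtain ⟨Bs, hBs⟩ := isCompact_Icc.exists_bound_of_continuousOn hs_cont
  obtain ⟨Br, hBr⟩ := isCompact_Icc.exists_bound_of_continuousOn hr_cont
  set B : ℝ := max 1 (max Bs Br) with hB
  have hB1 : (1:ℝ) ≤ B := le_max_left _ _
  have hsB : ∀ σ ∈ Icc (0:ℝ) T, |s σ| ≤ B := fun σ hσ =>
    (hBs σ hσ).trans ((le_max_left _ _).trans (le_max_right _ _))
  have hrB : ∀ σ ∈ Icc (0:ℝ) T, |r σ| ≤ B := fun σ hσ =>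
    (hBr σ hσ).trans ((le_max_right _ _).trans (le_max_right _ _))
  have habc : ∀ σ ∈ Icc (0:ℝ) T, |1 - s σ - r σ| ≤ 1 + 2 * B := by
    intro σ hσ
    have h1 := abs_le.mp (hsB σ hσ)
    have h2 := abs_le.mp (hrB σ hσ)
    rw [abs_le]; constructor <;> linarith [h1.1, h1.2, h2.1, h2.2]
  have hud : ∀ σ ∈ Icc (0:ℝ) T, |1 - d_D * u σ| ≤ 1 + d_D := by
    intro σ hσ
    have h1 := (hu01 σ hσ).1
    have h2 := (hu01 σ hσ).2
    have h3 : d_D * u σ ≤ d_D := by nlinarith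
    have h4 : 0 ≤ d_D * u σ := mul_nonneg hdD h1
    rw [abs_le]; constructor <;> linarith
  -- integrability of the vector fields on subintervals
  have hsint' : ∀ x ∈ Icc (0:ℝ) T, ∀ y ∈ Icc (0:ℝ) T, IntervalIntegrable
      (fun σ => (1 - s σ - r σ) * (1 - d_D * u σ) * s σ - d_T * s σ) volume x y := by
    intro x hx y hy
    apply hs_int.mono_set
    apply uIcc_subset_uIcc <;> rwa [uIcc_of_le hT.le]
  have hrint' : ∀ x ∈ Icc (0:ℝ) T, ∀ y ∈ Icc (0:ℝ) T, IntervalIntegrable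
      (fun σ => r_R * (1 - s σ - r σ) * r σ - d_T * r σ) volume x y := by
    intro x hx y hy
    apply hr_int.mono_set
    apply uIcc_subset_uIcc <;> rwa [uIcc_of_le hT.le]
  -- Step 1 : `r ≡ 0`
  set Mr : ℝ := r_R * (1 + 2 * B) + d_T with hMrdef
  have hMr : 0 ≤ Mr := by positivity
  have hr_zero : ∀ τ ∈ Icc (0:ℝ) T, r τ = 0 := by
    have key := gronwall_zero (a := 0) (b := T) (M := Mr) hT.le hMr
      (f := fun σ => |r σ|) hr_cont.abs (fun τ _ => abs_nonneg _) ?_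
    · exact fun τ hτ => abs_eq_zero.mp (key τ hτ)
    intro τ hτ
    have hsubτ : Icc (0:ℝ) τ ⊆ Icc (0:ℝ) T := Icc_subset_Icc le_rfl hτ.2
    have h1 : r τ = ∫ σ in (0:ℝ)..τ, (r_R * (1 - s σ - r σ) * r σ - d_T * r σ) := by
      rw [hr_eq τ hτ, hr0, zero_add]
    calc |r τ| = |∫ σ in (0:ℝ)..τ, (r_R * (1 - s σ - r σ) * r σ - d_T * r σ)| := by rw [h1]
      _ ≤ ∫ σ in (0:ℝ)..τ, |r_R * (1 - s σ - r σ) * r σ - d_T * r σ| :=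
          intervalIntegral.abs_integral_le_integral_abs hτ.1
      _ ≤ ∫ σ in (0:ℝ)..τ, Mr * |r σ| := by
          apply intervalIntegral.integral_mono_on hτ.1 (hrint' 0 (left_mem_Icc.mpr hT.le) τ hτ).abs
            ((continuousOn_const.mul ((hr_cont.mono hsubτ).abs)).intervalIntegrable_of_Icc hτ.1)
          intro σ hσ
          have hσT := hsubτ hσ
          have e1 := habc σ hσT
          have e2 := abs_nonneg (r σ)
          calc |r_R * (1 - s σ - r σ) * r σ - d_T * r σ|
              ≤ |r_R * (1 - s σ - r σ) * r σ| + |d_T * r σ| := abs_sub _ _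
            _ = r_R * |1 - s σ - r σ| * |r σ| + d_T * |r σ| := by
                rw [abs_mul, abs_mul, abs_mul, abs_of_nonneg hrR, abs_of_nonneg hdT]
            _ ≤ r_R * (1 + 2 * B) * |r σ| + d_T * |r σ| := by gcongr
            _ = Mr * |r σ| := by rw [hMrdef]; ring
      _ = Mr * ∫ σ in (0:ℝ)..τ, |r σ| := intervalIntegral.integral_const_mul _ _
  -- difference form of the integral equation for `s`
  have hshift : ∀ t₁ ∈ Icc (0:ℝ) T, ∀ τ ∈ Icc (0:ℝ) T, s τ - s t₁ =
      ∫ σ in t₁..τ, ((1 - s σ - r σ) * (1 - d_D * u σ) * s σ - d_T * s σ) := by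
    intro t₁ ht₁ τ hτ
    have h0 : (0:ℝ) ∈ Icc (0:ℝ) T := left_mem_Icc.mpr hT.le
    have hsub := intervalIntegral.integral_interval_sub_left
      (hsint' 0 h0 τ hτ) (hsint' 0 h0 t₁ ht₁)
    rw [hs_eq τ hτ, hs_eq t₁ ht₁]
    linarith [hsub]
  -- Step 2a : `0 ≤ s`
  have hs_nonneg : ∀ τ ∈ Icc (0:ℝ) T, 0 ≤ s τ := by
    by_contra h
    push_neg at h
    obtain ⟨τ₀, hτ₀, hneg⟩ := h
    have hsubτ₀ : Icc (0:ℝ) τ₀ ⊆ Icc (0:ℝ) T := Icc_subset_Icc le_rfl hτ₀.2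
    obtain ⟨t₁, ht₁, hzero, hpos⟩ := exit_point hτ₀.1 (g := fun t => -(s t))
      ((hs_cont.mono hsubτ₀).neg) (by simpa using hs0.1) (by simpa using hneg)
    have hsubt : Icc t₁ τ₀ ⊆ Icc (0:ℝ) T := Icc_subset_Icc ht₁.1 hτ₀.2
    have ht₁T : t₁ ∈ Icc (0:ℝ) T := hsubt ⟨le_rfl, ht₁.2.le⟩
    have hfnn : ∀ σ ∈ Icc t₁ τ₀, 0 ≤ -(s σ) := by
      intro σ hσ
      rcases eq_or_lt_of_le hσ.1 with h' | h'
      · rw [← h']; exact le_of_eq hzero.symm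
      · exact (hpos σ ⟨h', hσ.2⟩).le
    have Ms : ℝ := 0
    have key := gronwall_zero (a := t₁) (b := τ₀) (M := (1 + 2 * B) * (1 + d_D) + d_T)
      ht₁.2.le (by positivity) (f := fun t => -(s t)) ((hs_cont.mono hsubt).neg) hfnn ?_
    · have h2 : -(s τ₀) = 0 := key τ₀ ⟨ht₁.2.le, le_rfl⟩
      linarith
    intro τ hτ
    have hτT : τ ∈ Icc (0:ℝ) T := hsubt hτ
    have hst₁ : s t₁ = 0 := by simpa [neg_eq_zero] using hzero
    have h1 : -(s τ) = ∫ σ in t₁..τ, -((1 - s σ - r σ) * (1 - d_D * u σ) * s σ - d_T * s σ) := by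
      rw [intervalIntegral.integral_neg, ← hshift t₁ ht₁T τ hτT, hst₁]; ring
    show -(s τ) ≤ ((1 + 2 * B) * (1 + d_D) + d_T) * ∫ σ in t₁..τ, -(s σ)
    rw [h1]
    calc (∫ σ in t₁..τ, -((1 - s σ - r σ) * (1 - d_D * u σ) * s σ - d_T * s σ))
        ≤ ∫ σ in t₁..τ, ((1 + 2 * B) * (1 + d_D) + d_T) * -(s σ) := by
          apply intervalIntegral.integral_mono_on hτ.1 (hsint' t₁ ht₁T τ hτT).neg
            ((continuousOn_const.mul
              ((hs_cont.mono (hsubt.trans' (Icc_subset_Icc le_rfl hτ.2))).neg)).intervalIntegrable_of_Icc hτ.1)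
          intro σ hσ
          have hσ₀ : σ ∈ Icc t₁ τ₀ := Icc_subset_Icc le_rfl hτ.2 hσ
          have hσT : σ ∈ Icc (0:ℝ) T := hsubt hσ₀
          have e1 := habc σ hσT
          have e2 := hud σ hσT
          have e3 := hfnn σ hσ₀
          have e4 : |((1 - s σ - r σ) * (1 - d_D * u σ) - d_T)| ≤ (1 + 2 * B) * (1 + d_D) + d_T := by
            calc |((1 - s σ - r σ) * (1 - d_D * u σ) - d_T)|
                ≤ |(1 - s σ - r σ) * (1 - d_D * u σ)| + |d_T| := abs_sub _ _
              _ = |1 - s σ - r σ| * |1 - d_D * u σ| + d_T := by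
                  rw [abs_mul, abs_of_nonneg hdT]
              _ ≤ (1 + 2 * B) * (1 + d_D) + d_T := by gcongr
          calc -((1 - s σ - r σ) * (1 - d_D * u σ) * s σ - d_T * s σ)
              = ((1 - s σ - r σ) * (1 - d_D * u σ) - d_T) * -(s σ) := by ring
            _ ≤ |((1 - s σ - r σ) * (1 - d_D * u σ) - d_T)| * -(s σ) :=
                mul_le_mul_of_nonneg_right (le_abs_self _) e3
            _ ≤ ((1 + 2 * B) * (1 + d_D) + d_T) * -(s σ) :=
                mul_le_mul_of_nonneg_right e4 e3
      _ = ((1 + 2 * B) * (1 + d_D) + d_T) * ∫ σ in t₁..τ, -(s σ) :=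
          intervalIntegral.integral_const_mul _ _
  -- Step 2b : `s ≤ 1`
  have hs_le1 : ∀ τ ∈ Icc (0:ℝ) T, s τ ≤ 1 := by
    by_contra h
    push_neg at h
    obtain ⟨τ₀, hτ₀, hgt⟩ := h
    have hsubτ₀ : Icc (0:ℝ) τ₀ ⊆ Icc (0:ℝ) T := Icc_subset_Icc le_rfl hτ₀.2
    obtain ⟨t₁, ht₁, hzero, hpos⟩ := exit_point hτ₀.1 (g := fun t => s t - 1)
      ((hs_cont.mono hsubτ₀).sub continuousOn_const) (by simp [hs0.2]) (by simpa using hgt)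
    have hsubt : Icc t₁ τ₀ ⊆ Icc (0:ℝ) T := Icc_subset_Icc ht₁.1 hτ₀.2
    have ht₁T : t₁ ∈ Icc (0:ℝ) T := hsubt ⟨le_rfl, ht₁.2.le⟩
    have hfnn : ∀ σ ∈ Icc t₁ τ₀, 0 ≤ s σ - 1 := by
      intro σ hσ
      rcases eq_or_lt_of_le hσ.1 with h' | h'
      · rw [← h']; exact le_of_eq hzero.symm
      · exact (hpos σ ⟨h', hσ.2⟩).le
    have key := gronwall_zero (a := t₁) (b := τ₀) (M := (1 + d_D) * B)
      ht₁.2.le (by positivity) (f := fun t => s t - 1)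
      ((hs_cont.mono hsubt).sub continuousOn_const) hfnn ?_
    · have h2 : s τ₀ - 1 = 0 := key τ₀ ⟨ht₁.2.le, le_rfl⟩
      linarith
    intro τ hτ
    have hτT : τ ∈ Icc (0:ℝ) T := hsubt hτ
    have hst₁ : s t₁ = 1 := by linarith [hzero]
    have h1 : s τ - 1 = ∫ σ in t₁..τ, ((1 - s σ - r σ) * (1 - d_D * u σ) * s σ - d_T * s σ) := by
      rw [← hshift t₁ ht₁T τ hτT, hst₁]
    show s τ - 1 ≤ (1 + d_D) * B * ∫ σ in t₁..τ, (s σ - 1)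
    rw [h1]
    calc (∫ σ in t₁..τ, ((1 - s σ - r σ) * (1 - d_D * u σ) * s σ - d_T * s σ))
        ≤ ∫ σ in t₁..τ, (1 + d_D) * B * (s σ - 1) := by
          apply intervalIntegral.integral_mono_on hτ.1 (hsint' t₁ ht₁T τ hτT)
            ((continuousOn_const.mul
              (((hs_cont.mono (hsubt.trans' (Icc_subset_Icc le_rfl hτ.2)))).sub continuousOn_const)).intervalIntegrable_of_Icc hτ.1)
          intro σ hσ
          have hσ₀ : σ ∈ Icc t₁ τ₀ := Icc_subset_Icc le_rfl hτ.2 hσ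
          have hσT : σ ∈ Icc (0:ℝ) T := hsubt hσ₀
          have hrσ : r σ = 0 := hr_zero σ hσT
          have e2 := abs_le.mp (hud σ hσT)
          have e3 := hfnn σ hσ₀
          have e5 := abs_le.mp (hsB σ hσT)
          have hs1 : 1 ≤ s σ := by linarith
          have hsBσ : s σ ≤ B := e5.2
          rw [hrσ]
          have k1 : 0 ≤ (s σ - 1) * (1 - d_D * u σ + (1 + d_D)) * s σ :=
            mul_nonneg (mul_nonneg e3 (by linarith [e2.1])) (by linarith)
          have step1 : (1 - s σ - 0) * (1 - d_D * u σ) * s σ - d_T * s σ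
              ≤ (s σ - 1) * (1 + d_D) * s σ := by
            nlinarith [k1, mul_nonneg hdT (show (0:ℝ) ≤ s σ by linarith)]
          have step2 : (s σ - 1) * (1 + d_D) * s σ ≤ (1 + d_D) * B * (s σ - 1) := by
            nlinarith [mul_nonneg (mul_nonneg e3 (show (0:ℝ) ≤ 1 + d_D by linarith))
              (show (0:ℝ) ≤ B - s σ by linarith)]
          show _ ≤ (1 + d_D) * B * (s σ - 1)
          linarith
      _ = (1 + d_D) * B * ∫ σ in t₁..τ, (s σ - 1) := intervalIntegral.integral_const_mul _ _
  exact fun τ hτ => ⟨hr_zero τ hτ, hs_nonneg τ hτ, hs_le1 τ hτ⟩
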